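/- Let p be a prime, n ≥ 1, and for each i = 1, …, n let I_i = {α_i·k + β_i : k = 0, 1, …, H_i−1} ⊆ F_p be an arithmetic progression with α_i, β_i ∈ F_p, α_i ≠ 0 and 1 ≤ H_i ≤ p. Let S = I_1 × … × I_n ⊆ F_p^n. Then irreg(S) ≤ Π_{i=1}^n (9·p·log p / H_i), where log denotes the natural logarithm. -/

import Mathlib

noncomputable section

/-- The standard additive character `ψ(u) = exp(2πi·u.val/p)` on `F_p`. -/
def psiP (p : ℕ) (u : ZMod p) : ℂ :=
  Complex.exp (2 * Real.pi * Complex.I * (u.val : ℂ) / (p : ℂ))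

/-- Fourier transform of the indicator function of `S ⊆ F_p`. -/
def hatP (p : ℕ) [NeZero p] (S : Set (ZMod p)) (b : ZMod p) : ℂ :=
  (p : ℂ)⁻¹ * ∑ a : ZMod p, S.indicator (fun _ => (1 : ℂ)) a * psiP p (-(a * b))

/-- The irregularity of a subset `S ⊆ F_p`. -/
def irregP (p : ℕ) [NeZero p] (S : Set (ZMod p)) : ℝ :=
  ((p : ℝ) / S.ncard) * ∑ b : ZMod p, ‖hatP p S b‖

/-- Fourier transform of the indicator function of `S ⊆ F_p^n`. -/
def hatPn {n : ℕ} (p : ℕ) [NeZero p] (S : Set (Fin n → ZMod p)) (b : Fin n → ZMod p) : ℂ :=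
  ((p : ℂ) ^ n)⁻¹ *
    ∑ a : Fin n → ZMod p, S.indicator (fun _ => (1 : ℂ)) a * psiP p (-(∑ i, a i * b i))

/-- The irregularity of a subset `S ⊆ F_p^n`. -/
def irregPn {n : ℕ} (p : ℕ) [NeZero p] (S : Set (Fin n → ZMod p)) : ℝ :=
  ((p : ℝ) ^ n / S.ncard) * ∑ b : Fin n → ZMod p, ‖hatPn p S b‖

end

noncomputable section
open Complex Real

open Complex in
theorem abs_exp_theta (θ : ℝ) : ‖Complex.exp (θ * I) - 1‖ = 2 * |Real.sin (θ/2)| := by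
  rw [Complex.exp_mul_I]
  rw [Complex.norm_def, Complex.normSq_apply]
  simp only [Complex.add_re, Complex.add_im, Complex.sub_re, Complex.sub_im, Complex.cos_ofReal_re,
    Complex.mul_re, Complex.mul_im, Complex.sin_ofReal_re, Complex.sin_ofReal_im,
    Complex.cos_ofReal_im, Complex.I_re, Complex.I_im, Complex.one_re, Complex.one_im]
  have h1 : Real.cos θ = 1 - 2 * Real.sin (θ/2) ^ 2 := by
    have h := Real.cos_two_mul (θ/2)
    have h' : 2 * (θ/2) = θ := by ring
    rw [h'] at h
    nlinarith [Real.sin_sq_add_cos_sq (θ/2), Real.sin_sq_add_cos_sq θ]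
  have h2 : Real.sin θ = 2 * Real.sin (θ/2) * Real.cos (θ/2) := by
    have h := Real.sin_two_mul (θ/2)
    have h' : 2 * (θ/2) = θ := by ring
    rw [h'] at h; exact h
  rw [show 2 * |Real.sin (θ/2)| = Real.sqrt ((2*Real.sin (θ/2))^2) by
    rw [Real.sqrt_sq_eq_abs, abs_mul]; simp]
  congr 1
  nlinarith [Real.sin_sq_add_cos_sq (θ/2), Real.sin_sq_add_cos_sq θ]

def psiN (p m : ℕ) : ℂ := Complex.exp ((2 * Real.pi * m / p : ℝ) * Complex.I)

theorem psiP_eq (p : ℕ) (u : ZMod p) : psiP p u = psiN p u.val := by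
  unfold psiP psiN
  push_cast
  ring_nf

theorem psiN_add (p m m' : ℕ) : psiN p (m + m') = psiN p m * psiN p m' := by
  unfold psiN
  rw [← Complex.exp_add]
  push_cast
  ring_nf

theorem psiN_pow (p m k : ℕ) : psiN p (m * k) = psiN p m ^ k := by
  unfold psiN
  rw [← Complex.exp_nat_mul]
  push_cast
  ring_nf

theorem psiN_mod (p : ℕ) [NeZero p] (m : ℕ) : psiN p (m % p) = psiN p m := by
  conv_rhs => rw [← Nat.mod_add_div m p, psiN_add]
  have : psiN p (p * (m / p)) = 1 := by
    unfold psiN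
    have hp : (p : ℝ) ≠ 0 := Nat.cast_ne_zero.mpr (NeZero.ne p)
    rw [show (2 * Real.pi * ↑(p * (m / p)) / p : ℝ) = (m/p : ℕ) * (2 * Real.pi) by
      rw [Nat.cast_mul]; field_simp]
    rw [show ((((m/p : ℕ) * (2 * Real.pi) : ℝ)) : ℂ) * Complex.I = (((m/p : ℕ) : ℤ) : ℂ) * (2 * (Real.pi : ℂ) * Complex.I) by
      simp only [Complex.ofReal_mul, Complex.ofReal_natCast, Int.cast_natCast,
        Complex.ofReal_ofNat]; ring]
    exact Complex.exp_int_mul_two_pi_mul_I _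
  rw [this, mul_one]

theorem abs_psiN (p m : ℕ) : ‖psiN p m‖ = 1 := Complex.norm_exp_ofReal_mul_I _

theorem psiP_zero (p : ℕ) [NeZero p] : psiP p 0 = 1 := by
  rw [psiP_eq]; simp [psiN, ZMod.val_zero]

theorem psiP_mul_natCast (p : ℕ) [NeZero p] [Fact p.Prime] (c : ZMod p) (k : ℕ) :
    psiP p (c * (k : ZMod p)) = psiP p c ^ k := by
  rw [psiP_eq, psiP_eq, ← psiN_pow, ← psiN_mod p (c.val * k)]
  congr 1
  rw [ZMod.val_mul, ZMod.val_natCast]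
  conv_rhs => rw [Nat.mul_mod]
  simp [Nat.mod_mod_of_dvd]

theorem psiP_add (p : ℕ) [NeZero p] (u v : ZMod p) : psiP p (u + v) = psiP p u * psiP p v := by
  rw [psiP_eq, psiP_eq, psiP_eq, ← psiN_add, ← psiN_mod p (u.val + v.val), ZMod.val_add]

theorem abs_psiP_sub_one (p : ℕ) [NeZero p] (c : ZMod p) (hc : c ≠ 0) :
    4 * ((min c.val (p - c.val) : ℕ) : ℝ) / p ≤ ‖psiP p c - 1‖ := by
  have hp : (0 : ℝ) < p := by exact_mod_cast Nat.pos_of_ne_zero (NeZero.ne p)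
  set j := c.val with hj
  have hj0 : 0 < j := by
    rcases Nat.pos_of_ne_zero (fun h => hc (by rwa [← ZMod.val_eq_zero, ← hj])) with h
    exact h
  have hjp : j < p := ZMod.val_lt c
  have habs : ‖psiP p c - 1‖ = 2 * |Real.sin (Real.pi * j / p)| := by
    rw [psiP_eq, psiN]
    rw [abs_exp_theta]
    congr 2
    rw [← hj]; ring_nf
  rw [habs]
  -- sin is nonneg here
  have hθmem : Real.pi * j / p ∈ Set.Icc 0 Real.pi := by
    constructor
    · positivity
    · rw [div_le_iff₀ hp]
      have : (j : ℝ) ≤ p := by exact_mod_cast hjp.le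
      nlinarith [Real.pi_pos]
  have hsin : Real.sin (Real.pi * j / p) = Real.sin (Real.pi * (min j (p - j)) / p) := by
    rcases le_total j (p - j) with h | h
    · rw [min_eq_left h]
    · rw [min_eq_right h]
      have hcast : ((p - j : ℕ) : ℝ) = p - j := by
        rw [Nat.cast_sub hjp.le]
      rw [hcast, show Real.pi * ((p:ℝ) - j) / p = Real.pi - Real.pi * j / p by field_simp,
        Real.sin_pi_sub]
  set m := min j (p - j) with hm
  have hm0 : 0 < m := lt_min hj0 (by omega)
  have hm2 : 2 * m ≤ p := by omega
  have hle : Real.pi * m / p ≤ Real.pi / 2 := by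
    rw [div_le_div_iff₀ hp two_pos]
    have : (2 : ℝ) * m ≤ p := by exact_mod_cast hm2
    nlinarith [Real.pi_pos]
  have h0 : 0 ≤ Real.pi * m / p := by positivity
  have := Real.mul_le_sin h0 hle
  have hval : 2 / Real.pi * (Real.pi * m / p) = 2 * m / p := by
    field_simp
  have hnn : 0 ≤ Real.sin (Real.pi * m / p) :=
    Real.sin_nonneg_of_mem_Icc ⟨h0, le_trans hle (by linarith [Real.pi_pos])⟩
  rw [hsin, _root_.abs_of_nonneg hnn]
  rw [hval] at this
  calc 4 * (m : ℝ) / p = 2 * (2 * m / p) := by ring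
    _ ≤ 2 * Real.sin (Real.pi * m / p) := by linarith

theorem abs_psiP (p : ℕ) (u : ZMod p) : ‖psiP p u‖ = 1 := by
  rw [psiP_eq]; exact abs_psiN p _

theorem psiP_ne_one (p : ℕ) [NeZero p] (c : ZMod p) (hc : c ≠ 0) : psiP p c ≠ 1 := by
  intro h
  have h1 := abs_psiP_sub_one p c hc
  rw [h, sub_self, norm_zero] at h1
  have hp : (0 : ℝ) < p := by exact_mod_cast Nat.pos_of_ne_zero (NeZero.ne p)
  have hm : 0 < min c.val (p - c.val) := by
    have : c.val ≠ 0 := fun h' => hc (by rwa [← ZMod.val_eq_zero])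
    have := ZMod.val_lt c
    omega
  have : (0:ℝ) < 4 * ((min c.val (p - c.val) : ℕ) : ℝ) / p := by positivity
  linarith

theorem abs_geom_le (z : ℂ) (hz : ‖z‖ = 1) (hz1 : z ≠ 1) (H : ℕ) :
    ‖∑ k ∈ Finset.range H, z ^ k‖ ≤ 2 / ‖z - 1‖ := by
  rw [geom_sum_eq hz1, norm_div]
  have hnum : ‖z ^ H - 1‖ ≤ 2 := by
    calc ‖z ^ H - 1‖ ≤ ‖z ^ H‖ + ‖(1:ℂ)‖ := by
          simpa [sub_eq_add_neg] using norm_add_le (z ^ H) (-1)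
      _ = 2 := by rw [norm_pow, hz, one_pow, norm_one]; norm_num
  have hden : 0 < ‖z - 1‖ :=
    norm_pos_iff.mpr (sub_ne_zero.mpr hz1)
  exact div_le_div_of_nonneg_right hnum hden.le

theorem harmonic_bound (p : ℕ) (hp : 1 ≤ p) :
    ∑ j ∈ Finset.Ico 1 p, (1 / j : ℝ) ≤ 1 + Real.log p := by
  rcases Nat.lt_or_ge p 2 with h | h
  · interval_cases p
    · simp
  · have h1 : ∑ j ∈ Finset.Ico 1 p, (1 / j : ℝ) = (harmonic (p - 1) : ℝ) := by
      rw [Finset.sum_Ico_eq_sum_range]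
      unfold harmonic
      push_cast
      refine Finset.sum_congr rfl fun i _ => ?_
      rw [one_div, add_comm (1:ℝ) (i:ℝ)]
    rw [h1]
    refine (harmonic_le_one_add_log _).trans ?_
    have h2 : (1:ℝ) ≤ ((p - 1 : ℕ) : ℝ) := by
      have : 1 ≤ p - 1 := by omega
      exact_mod_cast this
    have h3 : ((p-1 : ℕ):ℝ) ≤ p := by
      have : p - 1 ≤ p := by omega
      exact_mod_cast this
    have := Real.log_le_log (by linarith : (0:ℝ) < ((p-1:ℕ):ℝ)) h3
    linarith

theorem sum_nonzero_bound (p : ℕ) [Fact p.Prime] :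
    ∑ c ∈ Finset.univ.erase (0 : ZMod p), 2 / ‖psiP p c - 1‖ ≤
      p * (1 + Real.log p) := by
  have hp : (0 : ℝ) < p := by exact_mod_cast (Fact.out : p.Prime).pos
  have step1 : ∑ c ∈ Finset.univ.erase (0 : ZMod p), 2 / ‖psiP p c - 1‖ ≤
      ∑ c ∈ Finset.univ.erase (0 : ZMod p),
        (p / 2) * (1 / (c.val : ℝ) + 1 / ((p - c.val : ℕ) : ℝ)) := by
    refine Finset.sum_le_sum fun c hc => ?_
    have hc0 : c ≠ 0 := Finset.ne_of_mem_erase hc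
    have hval : 0 < c.val := Nat.pos_of_ne_zero (fun h => hc0 (by rwa [← ZMod.val_eq_zero]))
    have hvlt : c.val < p := ZMod.val_lt c
    set m := min c.val (p - c.val) with hm
    have hm0 : 0 < m := by omega
    have hmr : (0:ℝ) < 4 * ((m:ℕ) : ℝ) / p := by positivity
    have hle := abs_psiP_sub_one p c hc0
    have t1 : 2 / ‖psiP p c - 1‖ ≤ 2 / (4 * ((m:ℕ):ℝ) / p) :=
      div_le_div_of_nonneg_left (by norm_num) hmr hle
    have t2 : 2 / (4 * ((m:ℕ):ℝ) / p) = p / (2 * m) := by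
      rw [div_div_eq_mul_div]
      rw [eq_div_iff (by positivity)]
      field_simp
      ring
    have hsub : (0:ℝ) < ((p - c.val : ℕ) : ℝ) := by
      have : 0 < p - c.val := by omega
      exact_mod_cast this
    have hvr : (0:ℝ) < (c.val : ℝ) := by exact_mod_cast hval
    have key : (1:ℝ)/m ≤ 1 / (c.val : ℝ) + 1 / ((p - c.val : ℕ) : ℝ) := by
      rcases min_cases c.val (p - c.val) with ⟨h1, _⟩ | ⟨h1, _⟩ <;> rw [hm, h1]
      · exact le_add_of_nonneg_right (by positivity)
      · exact le_add_of_nonneg_left (by positivity)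
    have t3 : (p : ℝ) / (2 * m) ≤ (p / 2) * (1 / (c.val : ℝ) + 1 / ((p - c.val : ℕ) : ℝ)) := by
      have hmrr : (0:ℝ) < (m:ℝ) := by exact_mod_cast hm0
      calc (p : ℝ) / (2 * m) = (p / 2) * (1 / m) := by field_simp
        _ ≤ (p / 2) * (1 / (c.val : ℝ) + 1 / ((p - c.val : ℕ) : ℝ)) :=
            mul_le_mul_of_nonneg_left key (by positivity)
    exact t1.trans (t2 ▸ t3)
  refine step1.trans ?_
  rw [← Finset.mul_sum]
  have step2 : ∑ c ∈ Finset.univ.erase (0 : ZMod p),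
      (1 / (c.val : ℝ) + 1 / ((p - c.val : ℕ) : ℝ)) =
      ∑ j ∈ Finset.Ico 1 p, (1 / (j : ℝ) + 1 / ((p - j : ℕ) : ℝ)) := by
    refine Finset.sum_nbij' (fun c => c.val) (fun j => (j : ZMod p)) ?_ ?_ ?_ ?_ ?_
    · intro c hc
      have hc0 : c ≠ 0 := Finset.ne_of_mem_erase hc
      have : 0 < c.val := Nat.pos_of_ne_zero (fun h => hc0 (by rwa [← ZMod.val_eq_zero]))
      exact Finset.mem_Ico.mpr ⟨this, ZMod.val_lt c⟩
    · intro j hj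
      rw [Finset.mem_Ico] at hj
      refine Finset.mem_erase.mpr ⟨?_, Finset.mem_univ _⟩
      intro h
      have hv := ZMod.val_natCast_of_lt hj.2
      rw [h, ZMod.val_zero] at hv
      omega
    · intro c _; exact ZMod.natCast_rightInverse c
    · intro j hj
      rw [Finset.mem_Ico] at hj
      exact ZMod.val_natCast_of_lt hj.2
    · intro c _; rfl
  rw [step2]
  have step3 : ∑ j ∈ Finset.Ico 1 p, (1 / (j : ℝ) + 1 / ((p - j : ℕ) : ℝ)) =
      2 * ∑ j ∈ Finset.Ico 1 p, (1 / (j : ℝ)) := by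
    rw [Finset.sum_add_distrib, two_mul]
    congr 1
    have := Finset.sum_Ico_reflect (fun j => (1 / (j : ℝ))) 1 (n := p) (m := p) (by omega)
    simpa using this
  rw [step3]
  have step4 := harmonic_bound p (Fact.out : p.Prime).pos
  calc (p:ℝ)/2 * (2 * ∑ j ∈ Finset.Ico 1 p, (1/(j:ℝ))) = p * ∑ j ∈ Finset.Ico 1 p, (1/(j:ℝ)) := by ring
    _ ≤ p * (1 + Real.log p) := by
        exact mul_le_mul_of_nonneg_left step4 hp.le

def APset (p : ℕ) (α β : ZMod p) (H : ℕ) : Set (ZMod p) :=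
  {a | ∃ k : ℕ, k < H ∧ a = α * (k : ZMod p) + β}

section OneDim
variable (p : ℕ) [Fact p.Prime] (α β : ZMod p) (H : ℕ)

theorem APset_eq (hHp : H ≤ p) :
    APset p α β H = ↑((Finset.range H).image (fun k : ℕ => α * (k : ZMod p) + β)) := by
  ext a
  simp only [APset, Set.mem_setOf_eq, Finset.coe_image, Set.mem_image, Finset.mem_coe,
    Finset.mem_range]
  constructor
  · rintro ⟨k, hk, rfl⟩; exact ⟨k, hk, rfl⟩
  · rintro ⟨k, hk, rfl⟩; exact ⟨k, hk, rfl⟩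

theorem g_injOn (hα : α ≠ 0) (hHp : H ≤ p) :
    Set.InjOn (fun k : ℕ => α * (k : ZMod p) + β) ↑(Finset.range H) := by
  intro k hk k' hk' h
  simp only [Finset.coe_range, Set.mem_Iio] at hk hk'
  simp only at h
  have h2 : (k : ZMod p) = (k' : ZMod p) := mul_left_cancel₀ hα (add_right_cancel h)
  have := congrArg ZMod.val h2
  rwa [ZMod.val_natCast_of_lt (lt_of_lt_of_le hk hHp),
    ZMod.val_natCast_of_lt (lt_of_lt_of_le hk' hHp)] at this

theorem ncard_APset (hα : α ≠ 0) (hHp : H ≤ p) : (APset p α β H).ncard = H := by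
  rw [APset_eq p α β H hHp, Set.ncard_coe_finset,
    Finset.card_image_of_injOn (g_injOn p α β H hα hHp), Finset.card_range]

theorem hatP_formula (hα : α ≠ 0) (hHp : H ≤ p) (b : ZMod p) :
    hatP p (APset p α β H) b =
      (p : ℂ)⁻¹ * ∑ k ∈ Finset.range H, psiP p (-((α * (k : ZMod p) + β) * b)) := by
  unfold hatP
  congr 1
  rw [APset_eq p α β H hHp]
  rw [show ∑ a : ZMod p,
      (↑((Finset.range H).image (fun k : ℕ => α * (k : ZMod p) + β)) : Set (ZMod p)).indicator
        (fun _ => (1:ℂ)) a * psiP p (-(a * b)) =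
      ∑ a ∈ (Finset.range H).image (fun k : ℕ => α * (k : ZMod p) + β),
        psiP p (-(a * b)) from ?_]
  · exact Finset.sum_image fun k hk k' hk' h => g_injOn p α β H hα hHp (by simpa using hk) (by simpa using hk') h
  · rw [← Finset.sum_subset (Finset.subset_univ _) (fun x _ hx => by
      rw [Set.indicator_of_notMem (fun h => hx (Finset.mem_coe.mp h)), zero_mul])]
    exact Finset.sum_congr rfl fun x hx => by
      rw [Set.indicator_of_mem (Finset.mem_coe.mpr hx), one_mul]

theorem abs_hatP_zero (hα : α ≠ 0) (hHp : H ≤ p) :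
    ‖hatP p (APset p α β H) 0‖ = H / p := by
  rw [hatP_formula p α β H hα hHp]
  simp only [mul_zero, neg_zero, psiP_zero, Finset.sum_const, Finset.card_range, nsmul_eq_mul,
    mul_one]
  rw [norm_mul, norm_inv, Complex.norm_natCast, Complex.norm_natCast]
  rw [inv_mul_eq_div]

theorem abs_hatP_ne_zero (hα : α ≠ 0) (hHp : H ≤ p) (b : ZMod p) (hb : b ≠ 0) :
    ‖hatP p (APset p α β H) b‖ ≤
      (p : ℝ)⁻¹ * (2 / ‖psiP p (-(α * b)) - 1‖) := by
  have hab : -(α * b) ≠ 0 := by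
    simp only [neg_ne_zero]
    exact mul_ne_zero hα hb
  rw [hatP_formula p α β H hα hHp]
  have hterm : ∀ k ∈ Finset.range H, psiP p (-((α * (k : ZMod p) + β) * b)) =
      psiP p (-(β * b)) * psiP p (-(α * b)) ^ k := by
    intro k _
    rw [← psiP_mul_natCast p (-(α * b)) k, ← psiP_add]
    congr 1
    ring
  rw [Finset.sum_congr rfl hterm, ← Finset.mul_sum]
  rw [norm_mul, norm_mul, norm_inv, Complex.norm_natCast, abs_psiP, one_mul]
  have hgeom := abs_geom_le (psiP p (-(α * b))) (abs_psiP p _) (psiP_ne_one p _ hab) H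
  have hp0 : (0:ℝ) ≤ (p : ℝ)⁻¹ := by positivity
  exact mul_le_mul_of_nonneg_left hgeom hp0

theorem sum_abs_hatP (hα : α ≠ 0) (hH1 : 1 ≤ H) (hHp : H ≤ p) :
    ∑ b : ZMod p, ‖hatP p (APset p α β H) b‖ ≤
      (H + p * (1 + Real.log p)) / p := by
  have hp : (0 : ℝ) < p := by exact_mod_cast (Fact.out : p.Prime).pos
  rw [← Finset.add_sum_erase Finset.univ _ (Finset.mem_univ (0 : ZMod p))]
  have h1 := abs_hatP_zero p α β H hα hHp
  have h2 : ∑ b ∈ Finset.univ.erase (0 : ZMod p),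
      ‖hatP p (APset p α β H) b‖ ≤
      (p:ℝ)⁻¹ * ∑ c ∈ Finset.univ.erase (0 : ZMod p), 2 / ‖psiP p c - 1‖ := by
    rw [Finset.mul_sum]
    have step : ∑ b ∈ Finset.univ.erase (0 : ZMod p),
        ‖hatP p (APset p α β H) b‖ ≤
        ∑ b ∈ Finset.univ.erase (0 : ZMod p),
        (p:ℝ)⁻¹ * (2 / ‖psiP p (-(α * b)) - 1‖) :=
      Finset.sum_le_sum fun b hb =>
        abs_hatP_ne_zero p α β H hα hHp b (Finset.ne_of_mem_erase hb)
    refine step.trans (le_of_eq ?_)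
    refine Finset.sum_nbij' (fun b => -(α * b)) (fun c => -(α⁻¹ * c)) ?_ ?_ ?_ ?_ ?_
    · intro b hb
      refine Finset.mem_erase.mpr ⟨?_, Finset.mem_univ _⟩
      simp only [neg_ne_zero]
      exact mul_ne_zero hα (Finset.ne_of_mem_erase hb)
    · intro c hc
      refine Finset.mem_erase.mpr ⟨?_, Finset.mem_univ _⟩
      simp only [neg_ne_zero]
      exact mul_ne_zero (inv_ne_zero hα) (Finset.ne_of_mem_erase hc)
    · intro b _
      simp only [mul_neg, neg_neg, ← mul_assoc, inv_mul_cancel₀ hα, one_mul]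
    · intro c _
      simp only [mul_neg, neg_neg, ← mul_assoc, mul_inv_cancel₀ hα, one_mul]
    · intro b _
      rfl
  calc ‖hatP p (APset p α β H) 0‖ +
        ∑ b ∈ Finset.univ.erase (0 : ZMod p), ‖hatP p (APset p α β H) b‖
      ≤ (H : ℝ) / p + (p:ℝ)⁻¹ * (p * (1 + Real.log p)) := by
        rw [h1]
        have := sum_nonzero_bound p
        have h3 := h2.trans (mul_le_mul_of_nonneg_left this (by positivity : (0:ℝ) ≤ (p:ℝ)⁻¹))
        linarith
    _ = (H + p * (1 + Real.log p)) / p := by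
        field_simp
end OneDim

theorem irregP_APset (p : ℕ) [Fact p.Prime] (α β : ZMod p) (H : ℕ)
    (hα : α ≠ 0) (hH1 : 1 ≤ H) (hHp : H ≤ p) :
    irregP p (APset p α β H) ≤ 9 * p * Real.log p / H := by
  have hp2 : 2 ≤ p := (Fact.out : p.Prime).two_le
  have hp : (0 : ℝ) < p := by positivity
  have hHr : (0:ℝ) < H := by exact_mod_cast hH1
  have hlog : (1:ℝ)/4 ≤ Real.log p := by
    have h2 : Real.log 2 ≤ Real.log p :=
      Real.log_le_log (by norm_num) (by exact_mod_cast hp2)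
    have := Real.log_two_gt_d9
    linarith
  unfold irregP
  rw [ncard_APset p α β H hα hHp]
  have hsum := sum_abs_hatP p α β H hα hH1 hHp
  have hnn : (0:ℝ) ≤ (p:ℝ)/H := by positivity
  calc (p:ℝ)/H * ∑ b : ZMod p, ‖hatP p (APset p α β H) b‖
      ≤ (p:ℝ)/H * ((H + p * (1 + Real.log p)) / p) := mul_le_mul_of_nonneg_left hsum hnn
    _ = (H + p * (1 + Real.log p)) / H := by field_simp
    _ ≤ 9 * p * Real.log p / H := by
        rw [div_le_div_iff₀ hHr hHr]
        have hHp' : (H:ℝ) ≤ p := by exact_mod_cast hHp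
        nlinarith [mul_le_mul_of_nonneg_right hHp' hHr.le,
          mul_nonneg (mul_nonneg hp.le hHr.le) (by linarith : (0:ℝ) ≤ 8 * Real.log p - 2)]

theorem psiP_sum (p : ℕ) [NeZero p] {ι : Type*} (s : Finset ι) (f : ι → ZMod p) :
    psiP p (∑ i ∈ s, f i) = ∏ i ∈ s, psiP p (f i) := by
  induction s using Finset.cons_induction with
  | empty => simp [psiP_zero]
  | cons a s ha ih => rw [Finset.sum_cons, Finset.prod_cons, psiP_add, ih]

theorem hatPn_pi {n : ℕ} (p : ℕ) [Fact p.Prime] (I : Fin n → Set (ZMod p))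
    (b : Fin n → ZMod p) :
    hatPn p (Set.univ.pi I) b = ∏ i, hatP p (I i) (b i) := by
  unfold hatPn hatP
  have hind : ∀ a : Fin n → ZMod p,
      (Set.univ.pi I).indicator (fun _ => (1:ℂ)) a * psiP p (-(∑ i, a i * b i)) =
      ∏ i, ((I i).indicator (fun _ => (1:ℂ)) (a i) * psiP p (-(a i * b i))) := by
    intro a
    rw [show -(∑ i, a i * b i) = ∑ i, -(a i * b i) by rw [← Finset.sum_neg_distrib]]
    rw [psiP_sum, Finset.prod_mul_distrib]
    congr 1
    by_cases h : a ∈ Set.univ.pi I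
    · rw [Set.indicator_of_mem h]
      rw [Set.mem_univ_pi] at h
      rw [Finset.prod_congr rfl (fun i _ => Set.indicator_of_mem (h i) _)]
      simp
    · rw [Set.indicator_of_notMem h]
      rw [Set.mem_univ_pi] at h; push_neg at h
      obtain ⟨i, hi⟩ := h
      symm
      apply Finset.prod_eq_zero (Finset.mem_univ i)
      rw [Set.indicator_of_notMem hi]
  rw [Finset.sum_congr rfl (fun a _ => hind a)]
  have := (Finset.prod_univ_sum (fun _ : Fin n => (Finset.univ : Finset (ZMod p)))
    (fun i x => (I i).indicator (fun _ => (1:ℂ)) x * psiP p (-(x * b i)))).symm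
  rw [Fintype.piFinset_univ] at this
  rw [this]
  rw [show ((p:ℂ)^n)⁻¹ = ∏ _i : Fin n, (p:ℂ)⁻¹ by
    rw [Finset.prod_const, Finset.card_univ, Fintype.card_fin, inv_pow]]
  rw [← Finset.prod_mul_distrib]

theorem ncard_univ_pi {n : ℕ} (p : ℕ) [NeZero p] (I : Fin n → Set (ZMod p)) :
    (Set.univ.pi I).ncard = ∏ i, (I i).ncard := by
  rw [← Nat.card_coe_set_eq, Nat.card_congr (Equiv.Set.univPi I), Nat.card_pi]
  exact Finset.prod_congr rfl fun i _ => Nat.card_coe_set_eq _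

theorem irregPn_pi {n : ℕ} (p : ℕ) [Fact p.Prime] (I : Fin n → Set (ZMod p)) :
    irregPn p (Set.univ.pi I) = ∏ i, irregP p (I i) := by
  unfold irregPn irregP
  rw [ncard_univ_pi]
  have hsum : ∑ b : Fin n → ZMod p, ‖hatPn p (Set.univ.pi I) b‖ =
      ∏ i, ∑ x : ZMod p, ‖hatP p (I i) x‖ := by
    have key : ∀ b : Fin n → ZMod p, ‖hatPn p (Set.univ.pi I) b‖ =
        ∏ i, ‖hatP p (I i) (b i)‖ := fun b => by
      rw [hatPn_pi p I b, norm_prod]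
    rw [Finset.sum_congr rfl (fun b _ => key b)]
    have := (Finset.prod_univ_sum (fun _ : Fin n => (Finset.univ : Finset (ZMod p)))
      (fun i x => ‖hatP p (I i) x‖)).symm
    rw [Fintype.piFinset_univ] at this
    rw [← this]
  rw [hsum, Finset.prod_mul_distrib, Finset.prod_div_distrib, Finset.prod_const, Nat.cast_prod,
    Finset.card_univ, Fintype.card_fin]


/-- The irregularity of a product of arithmetic progressions is at most
`∏ᵢ (9·p·log p / Hᵢ)`. -/
theorem irreg_product_of_arith_progressions (p : ℕ) [Fact p.Prime] (n : ℕ) (hn : 1 ≤ n)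
    (α β : Fin n → ZMod p) (H : Fin n → ℕ) (hα : ∀ i, α i ≠ 0)
    (hH1 : ∀ i, 1 ≤ H i) (hHp : ∀ i, H i ≤ p) :
    irregPn p {a : Fin n → ZMod p | ∀ i, ∃ k : ℕ, k < H i ∧ a i = α i * (k : ZMod p) + β i} ≤
      ∏ i, (9 * p * Real.log p / H i) := by
  have hset : {a : Fin n → ZMod p | ∀ i, ∃ k : ℕ, k < H i ∧ a i = α i * (k : ZMod p) + β i} =
      Set.univ.pi (fun i => APset p (α i) (β i) (H i)) := by
    ext a
    simp only [Set.mem_setOf_eq, Set.mem_univ_pi, APset]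
  rw [hset, irregPn_pi]
  apply Finset.prod_le_prod
  · intro i _
    unfold irregP
    apply mul_nonneg
    · positivity
    · exact Finset.sum_nonneg fun b _ => norm_nonneg _
  · intro i _
    exact irregP_APset p (α i) (β i) (H i) (hα i) (hH1 i) (hHp i)
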